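/- arXiv:2504.20613 — 2 statements merged into one kernel-verified Lean document; each statement's English description precedes it below -/
import Mathlib

section
/- For μ ≥ -1/2, the function z ↦ √z · J_μ(z) is bounded on (0,∞), where J_μ is the Bessel function of the first kind of order μ. -/
open MeasureTheory Filter Set

/-- Bessel function of the first kind of order `μ`. -/
noncomputable def besselJ (μ x : ℝ) : ℝ :=
  (x / 2) ^ μ *
    ∑' n : ℕ, ((-1 : ℝ) ^ n / ((n.factorial : ℝ) * Real.Gamma (μ + n + 1))) * (x / 2) ^ (2 * n)

/-- The constant `C_{α,μ} = e^{i(1+μ)(π/2-α)}/ sin α`. -/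
noncomputable def Cst (α μ : ℝ) : ℂ :=
  Complex.exp (Complex.I * ((1 + μ) * (Real.pi / 2 - α) : ℝ)) / (Real.sin α : ℂ)

/-- The fractional Hankel transform kernel (for `α ≠ π/2`),
`K_α(x,ξ) = C_{α,μ} e^{-i(x²+ξ²)c₁/2} √(xξc₂) J_μ(xξc₂)` with `c₁ = cot α`, `c₂ = csc α`. -/
noncomputable def frhtKernel (α μ x ξ : ℝ) : ℂ :=
  Cst α μ * Complex.exp (-Complex.I * (((x ^ 2 + ξ ^ 2) / 2 * Real.cot α : ℝ) : ℂ)) *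
    ((Real.sqrt (x * ξ * (Real.sin α)⁻¹) * besselJ μ (x * ξ * (Real.sin α)⁻¹) : ℝ) : ℂ)

/-- The fractional Hankel transform of a function. -/
noncomputable def frht (α μ : ℝ) (f : ℝ → ℂ) (ξ : ℝ) : ℂ :=
  ∫ x in Set.Ioi (0 : ℝ), frhtKernel α μ x ξ * f x

/-- The classical Hankel transform of order `μ`. -/
noncomputable def hankel (μ : ℝ) (g : ℝ → ℂ) (ξ : ℝ) : ℂ :=
  ∫ x in Set.Ioi (0 : ℝ), ((Real.sqrt (x * ξ) * besselJ μ (x * ξ) : ℝ) : ℂ) * g x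

/-- `H(μ,η) = Γ(1+μ/2-η/2)/(2^{η-1} Γ(μ/2+η/2))`. -/
noncomputable def Hconst (μ η : ℝ) : ℝ :=
  Real.Gamma (1 + μ / 2 - η / 2) / (2 ^ (η - 1) * Real.Gamma (μ / 2 + η / 2))

/-- `L` is slowly varying at the origin. -/
def SlowlyVaryingAtZero (L : ℝ → ℝ) : Prop :=
  ∀ a > 0, Filter.Tendsto (fun ε => L (a * ε) / L ε) (nhdsWithin 0 (Set.Ioi 0)) (nhds 1)

namespace BesselAux

/-- Coefficients bounded by `c K^n / n!`. -/
def Good (b : ℕ → ℝ) : Prop := ∃ c K : ℝ, 0 ≤ c ∧ 1 ≤ K ∧ ∀ n, |b n| ≤ c * K ^ n / n.factorial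

noncomputable def S (b : ℕ → ℝ) (t : ℝ) : ℝ := ∑' n, b n * t ^ n

def shift (b : ℕ → ℝ) : ℕ → ℝ := fun n => (n + 1) * b (n + 1)

theorem good_shift {b : ℕ → ℝ} (hb : Good b) : Good (shift b) := by
  obtain ⟨c, K, hc, hK, h⟩ := hb
  refine ⟨c * K, K, by positivity, hK, fun n => ?_⟩
  have h1 := h (n + 1)
  have hfac : ((n + 1).factorial : ℝ) = (n + 1) * n.factorial := by
    push_cast [Nat.factorial_succ]; ring
  have hn : (0:ℝ) < (n:ℝ) + 1 := by positivity
  have hfpos : (0:ℝ) < (n.factorial : ℝ) := by positivity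
  calc |shift b n| = ((n:ℝ) + 1) * |b (n + 1)| := by
        rw [shift, abs_mul, abs_of_pos hn]
    _ ≤ ((n:ℝ) + 1) * (c * K ^ (n+1) / (n+1).factorial) := by
        exact mul_le_mul_of_nonneg_left h1 hn.le
    _ = c * K * K ^ n / n.factorial := by
        rw [hfac]; field_simp; ring

theorem good_summable {b : ℕ → ℝ} (hb : Good b) (t : ℝ) :
    Summable (fun n => b n * t ^ n) := by
  obtain ⟨c, K, hc, hK, h⟩ := hb
  apply Summable.of_norm_bounded (g := fun n => c * (K * |t|) ^ n / n.factorial)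
  · exact (Real.summable_pow_div_factorial (K * |t|)).mul_left c |>.congr
      (fun n => by ring)
  · intro n
    have hfpos : (0:ℝ) < (n.factorial : ℝ) := by positivity
    calc ‖b n * t ^ n‖ = |b n| * |t| ^ n := by
          rw [norm_mul, norm_pow]; rfl
      _ ≤ (c * K ^ n / n.factorial) * |t| ^ n :=
          mul_le_mul_of_nonneg_right (h n) (by positivity)
      _ = c * (K * |t|) ^ n / n.factorial := by rw [mul_pow]; ring


theorem nat_add_one_le_two_pow (n : ℕ) : ((n:ℝ) + 1) ≤ 2 ^ n := by
  induction n with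
  | zero => norm_num
  | succ m ih =>
    rw [pow_succ]
    push_cast
    nlinarith [one_le_pow₀ (show (1:ℝ) ≤ 2 by norm_num) (n := m)]

theorem good_deriv_bound {b : ℕ → ℝ} {c K : ℝ} (hc : 0 ≤ c) (hK : 1 ≤ K)
    (h : ∀ n, |b n| ≤ c * K ^ n / n.factorial) {R : ℝ} (hR1 : 1 ≤ R) :
    ∀ n (y : ℝ), |y| ≤ R → ‖b n * ((n:ℝ) * y ^ (n - 1))‖ ≤ c * (2 * (K * R)) ^ n / n.factorial := by
  intro n y hyR
  have hR0 : (0:ℝ) < R := by linarith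
  have hK0 : (0:ℝ) < K := by linarith
  have hfpos : (0:ℝ) < (n.factorial : ℝ) := by positivity
  have hyp : |y| ^ (n-1) ≤ R ^ n :=
    (pow_le_pow_left₀ (abs_nonneg y) hyR _).trans (pow_le_pow_right₀ hR1 (Nat.sub_le n 1))
  have h1 : ‖b n * ((n:ℝ) * y ^ (n-1))‖ = |b n| * ((n:ℝ) * |y| ^ (n-1)) := by
    rw [norm_mul, norm_mul, norm_pow, Real.norm_natCast]; rfl
  have h2 : |b n| * ((n:ℝ) * |y| ^ (n-1)) ≤ (c * K ^ n / n.factorial) * ((n:ℝ) * R ^ n) :=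
    mul_le_mul (h n) (mul_le_mul_of_nonneg_left hyp (Nat.cast_nonneg n))
      (by positivity) (by positivity)
  have h3 : (n:ℝ) * R ^ n * K ^ n ≤ (2 * (K * R)) ^ n := by
    have hn : (n:ℝ) ≤ 2 ^ n := by linarith [nat_add_one_le_two_pow n]
    calc (n:ℝ) * R ^ n * K ^ n ≤ 2 ^ n * R ^ n * K ^ n :=
          mul_le_mul_of_nonneg_right (mul_le_mul_of_nonneg_right hn (by positivity)) (by positivity)
      _ = (2 * (K * R)) ^ n := by rw [mul_pow, mul_pow]; ring
  rw [h1]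
  refine h2.trans ?_
  rw [div_mul_eq_mul_div, div_le_div_iff₀ hfpos hfpos]
  nlinarith [pow_nonneg (show (0:ℝ) ≤ K by linarith) n, pow_nonneg (show (0:ℝ) ≤ R by linarith) n,
    mul_le_mul_of_nonneg_left h3 hc]

theorem good_hasDerivAt {b : ℕ → ℝ} (hb : Good b) (t : ℝ) :
    HasDerivAt (S b) (S (shift b) t) t := by
  obtain ⟨c, K, hc, hK, h⟩ := hb
  set R : ℝ := |t| + 1 with hR
  have hR1 : (1:ℝ) ≤ R := by simp [hR]
  have htmem : t ∈ Set.Ioo (-R) R := by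
    constructor
    · nlinarith [neg_abs_le t]
    · nlinarith [le_abs_self t]
  have husum : Summable (fun n => c * (2 * (K * R)) ^ n / (n.factorial : ℝ)) :=
    ((Real.summable_pow_div_factorial (2 * (K * R))).mul_left c).congr (fun n => by ring)
  have key : HasDerivAt (fun z => ∑' n, b n * z ^ n)
      (∑' n, b n * ((n:ℝ) * t ^ (n - 1))) t := by
    refine hasDerivAt_tsum_of_isPreconnected husum isOpen_Ioo (convex_Ioo _ _).isPreconnected
      (fun n y _ => (hasDerivAt_pow n y).const_mul (b n))
      (fun n y hy => good_deriv_bound hc hK h hR1 n y (abs_le.mpr ⟨hy.1.le, hy.2.le⟩))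
      htmem (good_summable ⟨c, K, hc, hK, h⟩ t) htmem
  have hsum : Summable (fun n => b n * ((n:ℝ) * t ^ (n-1))) :=
    Summable.of_norm_bounded husum
      (fun n => good_deriv_bound hc hK h hR1 n t (by nlinarith [le_abs_self t, neg_abs_le t, abs_nonneg t]))
  have hval : (∑' n, b n * ((n:ℝ) * t ^ (n - 1))) = S (shift b) t := by
    rw [Summable.tsum_eq_zero_add hsum]
    simp only [Nat.cast_zero, zero_mul, mul_zero, zero_add]
    rw [S]
    congr 1
    funext n
    simp only [shift, Nat.add_sub_cancel]
    push_cast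
    ring
  rw [← hval]
  exact key

noncomputable def a (μ : ℝ) (n : ℕ) : ℝ :=
  (-1 : ℝ) ^ n / ((n.factorial : ℝ) * Real.Gamma (μ + n + 1))

variable {μ : ℝ} (hμ : -1/2 ≤ μ)

theorem gamma_arg_pos (hμ : -1/2 ≤ μ) (n : ℕ) : 0 < μ + n + 1 := by
  have : (0:ℝ) ≤ n := Nat.cast_nonneg n
  linarith

theorem gamma_pos (hμ : -1/2 ≤ μ) (n : ℕ) : 0 < Real.Gamma (μ + n + 1) :=
  Real.Gamma_pos_of_pos (gamma_arg_pos hμ n)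

theorem gamma_mono (hμ : -1/2 ≤ μ) {n : ℕ} (hn : 1 ≤ n) :
    Real.Gamma (μ + 2) ≤ Real.Gamma (μ + n + 1) := by
  induction n with
  | zero => omega
  | succ m ih =>
    push_cast
    rcases Nat.eq_zero_or_pos m with h0 | hm
    · subst h0; norm_num; rw [show μ + 1 + 1 = μ + 2 from by ring]
    · have step : Real.Gamma ((μ + m + 1) + 1) = (μ + m + 1) * Real.Gamma (μ + m + 1) :=
        Real.Gamma_add_one (gamma_arg_pos hμ m).ne'
      have h2 : (1:ℝ) ≤ μ + m + 1 := by
        have h3 : (1:ℝ) ≤ (m:ℝ) := by exact_mod_cast hm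
        linarith
      calc Real.Gamma (μ + 2) ≤ Real.Gamma (μ + m + 1) := ih hm
        _ ≤ (μ + m + 1) * Real.Gamma (μ + m + 1) :=
            le_mul_of_one_le_left (gamma_pos hμ m).le h2
        _ = Real.Gamma (μ + ((m:ℝ) + 1) + 1) := by
            rw [show μ + ((m:ℝ) + 1) + 1 = (μ + m + 1) + 1 from by ring, step]

theorem good_a (hμ : -1/2 ≤ μ) : Good (a μ) := by
  refine ⟨max (Real.Gamma (μ + 1))⁻¹ (Real.Gamma (μ + 2))⁻¹, 1, ?_, le_refl 1, fun n => ?_⟩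
  · have h1 : 0 < Real.Gamma (μ + 1) := Real.Gamma_pos_of_pos (by linarith)
    positivity
  · have hΓ := gamma_pos hμ n
    have hfac : (0:ℝ) < (n.factorial : ℝ) := by positivity
    have habs : |a μ n| = ((n.factorial : ℝ) * Real.Gamma (μ + n + 1))⁻¹ := by
      rw [a, abs_div, abs_pow, abs_neg, abs_one, one_pow, abs_of_pos (by positivity), one_div]
    rw [habs, one_pow]
    rw [mul_inv, mul_comm]
    rw [div_eq_mul_inv, mul_one]
    apply mul_le_mul_of_nonneg_right _ (by positivity : (0:ℝ) ≤ (n.factorial:ℝ)⁻¹)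
    rcases Nat.eq_zero_or_pos n with h0 | h1
    · subst h0
      exact le_max_of_le_left (by rw [show μ + (0:ℕ) + 1 = μ + 1 by push_cast; ring])
    · refine le_max_of_le_right ?_
      have := gamma_mono hμ h1
      have h2 : 0 < Real.Gamma (μ + 2) := Real.Gamma_pos_of_pos (by linarith)
      exact inv_anti₀ h2 this

theorem a_recurrence (hμ : -1/2 ≤ μ) (n : ℕ) :
    ((n:ℝ) + 1) * (μ + n + 1) * a μ (n + 1) + a μ n = 0 := by
  have hΓ := gamma_pos hμ n
  have harg := gamma_arg_pos hμ n
  have step : Real.Gamma (μ + (n+1:ℕ) + 1) = (μ + n + 1) * Real.Gamma (μ + n + 1) := by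
    rw [show μ + ((n+1:ℕ):ℝ) + 1 = (μ + n + 1) + 1 by push_cast; ring]
    exact Real.Gamma_add_one harg.ne'
  have hfac : ((n+1).factorial : ℝ) = ((n:ℝ) + 1) * n.factorial := by
    push_cast [Nat.factorial_succ]; ring
  have hfac0 : (0:ℝ) < (n.factorial : ℝ) := by positivity
  rw [a, a, step, hfac, pow_succ]
  field_simp
  ring

theorem G_ode (hμ : -1/2 ≤ μ) (t : ℝ) :
    t * S (shift (shift (a μ))) t + (μ + 1) * S (shift (a μ)) t + S (a μ) t = 0 := by
  have h0 : HasSum (fun n => a μ n * t ^ n) (S (a μ) t) := (good_summable (good_a hμ) t).hasSum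
  have h1 : HasSum (fun n => shift (a μ) n * t ^ n) (S (shift (a μ)) t) :=
    (good_summable (good_shift (good_a hμ)) t).hasSum
  have h2 : HasSum (fun n => shift (shift (a μ)) n * t ^ n) (S (shift (shift (a μ))) t) :=
    (good_summable (good_shift (good_shift (good_a hμ))) t).hasSum
  set g : ℕ → ℝ := fun n => (n:ℝ) * shift (a μ) n * t ^ n with hg
  have hfun : (fun n => t * (shift (shift (a μ)) n * t ^ n)) = fun n => g (n + 1) := by
    funext n
    simp only [hg, shift]
    push_cast
    ring
  have hmul : HasSum (fun n => g (n + 1)) (t * S (shift (shift (a μ))) t) :=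
    hfun ▸ (h2.mul_left t)
  have hG : HasSum g (t * S (shift (shift (a μ))) t + ∑ i ∈ Finset.range 1, g i) :=
    (hasSum_nat_add_iff 1).mp hmul
  have hg0 : ∑ i ∈ Finset.range 1, g i = 0 := by simp [hg]
  rw [hg0, add_zero] at hG
  have total := hG.add ((h1.mul_left (μ + 1)).add h0)
  have hz : (fun n => g n + ((μ + 1) * (shift (a μ) n * t ^ n) + a μ n * t ^ n))
      = fun _ => (0:ℝ) := by
    funext n
    simp only [hg, shift]
    have hr := a_recurrence hμ n
    push_cast
    linear_combination (t ^ n) * hr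
  rw [hz] at total
  have := hasSum_zero.unique total
  linarith

section Main
variable (μ : ℝ)

noncomputable def Gf : ℝ → ℝ := S (a μ)
noncomputable def Gf₁ : ℝ → ℝ := S (shift (a μ))
noncomputable def Gf₂ : ℝ → ℝ := S (shift (shift (a μ)))
noncomputable def vf (z : ℝ) : ℝ := z ^ (μ + 1/2) * Gf μ (z^2/4)
noncomputable def vf₁ (z : ℝ) : ℝ :=
  (μ + 1/2) * z ^ (μ - 1/2) * Gf μ (z^2/4) + z ^ (μ + 1/2) * (Gf₁ μ (z^2/4) * (z/2))

variable {μ}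

theorem hasDerivAt_inner (z : ℝ) : HasDerivAt (fun z : ℝ => z^2/4) (z/2) z := by
  have h := (hasDerivAt_pow 2 z).div_const 4
  refine h.congr_deriv ?_
  push_cast
  ring

theorem hasDerivAt_Gcomp (hμ : -1/2 ≤ μ) (z : ℝ) :
    HasDerivAt (fun z => Gf μ (z^2/4)) (Gf₁ μ (z^2/4) * (z/2)) z :=
  (good_hasDerivAt (good_a hμ) (z^2/4)).comp z (hasDerivAt_inner z)

theorem hasDerivAt_G1comp (hμ : -1/2 ≤ μ) (z : ℝ) :
    HasDerivAt (fun z => Gf₁ μ (z^2/4)) (Gf₂ μ (z^2/4) * (z/2)) z :=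
  (good_hasDerivAt (good_shift (good_a hμ)) (z^2/4)).comp z (hasDerivAt_inner z)

theorem hasDerivAt_vf (hμ : -1/2 ≤ μ) {z : ℝ} (hz : 0 < z) :
    HasDerivAt (vf μ) (vf₁ μ z) z := by
  have h1 : HasDerivAt (fun z : ℝ => z ^ (μ + 1/2)) ((μ + 1/2) * z ^ (μ - 1/2)) z := by
    have := Real.hasDerivAt_rpow_const (x := z) (p := μ + 1/2) (Or.inl hz.ne')
    convert this using 2
    ring
  exact (h1.mul (hasDerivAt_Gcomp hμ z))

theorem hasDerivAt_vf₁ (hμ : -1/2 ≤ μ) {z : ℝ} (hz : 0 < z) :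
    HasDerivAt (vf₁ μ) (((μ^2 - 1/4)/z^2 - 1) * vf μ z) z := by
  have hrp1 : HasDerivAt (fun z : ℝ => z ^ (μ - 1/2)) ((μ - 1/2) * z ^ (μ - 3/2)) z := by
    have := Real.hasDerivAt_rpow_const (x := z) (p := μ - 1/2) (Or.inl hz.ne')
    convert this using 2
    ring
  have hrp2 : HasDerivAt (fun z : ℝ => z ^ (μ + 1/2)) ((μ + 1/2) * z ^ (μ - 1/2)) z := by
    have := Real.hasDerivAt_rpow_const (x := z) (p := μ + 1/2) (Or.inl hz.ne')
    convert this using 2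
    ring
  have hA := hasDerivAt_Gcomp hμ z
  have hB := hasDerivAt_G1comp hμ z
  have hterm1 := (hrp1.const_mul (μ + 1/2)).mul hA
  have hin : HasDerivAt (fun z : ℝ => z/2) (1/2) z := by
    simpa using (hasDerivAt_id z).div_const 2
  have hterm2 := hrp2.mul (hB.mul hin)
  have hsum := hterm1.add hterm2
  have hODE := G_ode hμ (z^2/4)
  have hQ : z ^ (μ - 1/2) = z ^ (μ - 3/2) * z := by
    rw [show μ - 1/2 = (μ - 3/2) + 1 from by ring, Real.rpow_add_one hz.ne']
  have hP : z ^ (μ + 1/2) = z ^ (μ - 3/2) * z * z := by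
    rw [show μ + 1/2 = (μ - 1/2) + 1 from by ring, Real.rpow_add_one hz.ne', hQ]
  have hz2 : z ^ 2 ≠ 0 := by positivity
  have hdiv : ((μ^2 - 1/4)/z^2 - 1) * vf μ z
      = (μ^2 - 1/4) * z ^ (μ - 3/2) * Gf μ (z^2/4) - z ^ (μ - 3/2) * z * z * Gf μ (z^2/4) := by
    rw [vf, hP]
    field_simp
  have hfun : vf₁ μ = fun z : ℝ =>
      (μ + 1/2) * z ^ (μ - 1/2) * Gf μ (z^2/4) + z ^ (μ + 1/2) * (Gf₁ μ (z^2/4) * (z/2)) := by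
    funext w
    rw [vf₁]
  rw [hfun, hdiv]
  refine hsum.congr_deriv ?_
  unfold Gf Gf₁ Gf₂
  simp only [Pi.mul_apply]
  rw [hP, hQ]
  linear_combination (z ^ (μ - 3/2) * z^2) * hODE

noncomputable def Ef (μ z : ℝ) : ℝ := (vf₁ μ z)^2 + (vf μ z)^2
noncomputable def Wf (μ z : ℝ) : ℝ := Ef μ z * Real.exp (|μ^2 - 1/4| / z)

theorem hasDerivAt_Ef (hμ : -1/2 ≤ μ) {z : ℝ} (hz : 0 < z) :
    HasDerivAt (Ef μ)
      (2 * vf₁ μ z * (((μ^2 - 1/4)/z^2 - 1) * vf μ z) + 2 * vf μ z * vf₁ μ z) z := by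
  have h1 := (hasDerivAt_vf₁ hμ hz).pow 2
  have h2 := (hasDerivAt_vf hμ hz).pow 2
  have := h1.add h2
  have hfun : Ef μ = fun z => (vf₁ μ z)^2 + (vf μ z)^2 := by funext w; rw [Ef]
  rw [hfun]
  refine this.congr_deriv ?_
  push_cast
  ring

theorem hasDerivAt_Wf (hμ : -1/2 ≤ μ) {z : ℝ} (hz : 0 < z) :
    HasDerivAt (Wf μ)
      ((2 * vf₁ μ z * (((μ^2 - 1/4)/z^2 - 1) * vf μ z) + 2 * vf μ z * vf₁ μ z)
          * Real.exp (|μ^2 - 1/4| / z)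
        + Ef μ z * (Real.exp (|μ^2 - 1/4| / z) * (|μ^2 - 1/4| * -(z^2)⁻¹))) z := by
  have hexp : HasDerivAt (fun z : ℝ => Real.exp (|μ^2 - 1/4| / z))
      (Real.exp (|μ^2 - 1/4| / z) * (|μ^2 - 1/4| * -(z^2)⁻¹)) z := by
    have hinv := (hasDerivAt_inv hz.ne').const_mul (|μ^2 - 1/4|)
    have := hinv.exp
    simpa [div_eq_mul_inv] using this
  have hfun : Wf μ = fun z => Ef μ z * Real.exp (|μ^2 - 1/4| / z) := by funext w; rw [Wf]
  rw [hfun]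
  exact (hasDerivAt_Ef hμ hz).mul hexp

theorem Wf_deriv_nonpos (hμ : -1/2 ≤ μ) {z : ℝ} (hz : 0 < z) :
    (2 * vf₁ μ z * (((μ^2 - 1/4)/z^2 - 1) * vf μ z) + 2 * vf μ z * vf₁ μ z)
          * Real.exp (|μ^2 - 1/4| / z)
        + Ef μ z * (Real.exp (|μ^2 - 1/4| / z) * (|μ^2 - 1/4| * -(z^2)⁻¹)) ≤ 0 := by
  set κ := |μ^2 - 1/4| with hκ
  have hκ0 : 0 ≤ κ := abs_nonneg _
  have hexp : 0 < Real.exp (κ / z) := Real.exp_pos _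
  have hz2 : (0:ℝ) < z^2 := by positivity
  set v := vf μ z
  set w := vf₁ μ z
  have hE : Ef μ z = w^2 + v^2 := rfl
  rw [hE]
  have key : 2 * w * (((μ^2 - 1/4)/z^2 - 1) * v) + 2 * v * w ≤ κ / z^2 * (w^2 + v^2) := by
    have h1 : 2 * w * (((μ^2 - 1/4)/z^2 - 1) * v) + 2 * v * w = 2 * v * w * ((μ^2 - 1/4)/z^2) := by
      ring
    rw [h1]
    have habs : 2 * v * w * (μ^2 - 1/4) ≤ κ * (w^2 + v^2) := by
      nlinarith [sq_nonneg (v - w), sq_nonneg (v + w), le_abs_self (μ^2 - 1/4),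
        neg_abs_le (μ^2 - 1/4), sq_nonneg v, sq_nonneg w]
    calc 2 * v * w * ((μ^2 - 1/4)/z^2) = (2 * v * w * (μ^2 - 1/4)) / z^2 := by ring
      _ ≤ (κ * (w^2 + v^2)) / z^2 := by gcongr
      _ = κ / z^2 * (w^2 + v^2) := by ring
  have expand : (2 * w * (((μ^2 - 1/4)/z^2 - 1) * v) + 2 * v * w) * Real.exp (κ / z)
        + (w^2 + v^2) * (Real.exp (κ / z) * (κ * -(z^2)⁻¹))
      = Real.exp (κ / z) * ((2 * w * (((μ^2 - 1/4)/z^2 - 1) * v) + 2 * v * w)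
          - κ / z^2 * (w^2 + v^2)) := by
    field_simp
    ring
  rw [expand]
  apply mul_nonpos_of_nonneg_of_nonpos hexp.le
  linarith

theorem Wf_antitoneOn (hμ : -1/2 ≤ μ) : AntitoneOn (Wf μ) (Set.Ici 1) := by
  apply antitoneOn_of_hasDerivWithinAt_nonpos (convex_Ici 1)
    (f' := fun z => (2 * vf₁ μ z * (((μ^2 - 1/4)/z^2 - 1) * vf μ z) + 2 * vf μ z * vf₁ μ z)
          * Real.exp (|μ^2 - 1/4| / z)
        + Ef μ z * (Real.exp (|μ^2 - 1/4| / z) * (|μ^2 - 1/4| * -(z^2)⁻¹)))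
  · intro x hx
    have hx0 : (0:ℝ) < x := lt_of_lt_of_le one_pos hx
    exact (hasDerivAt_Wf hμ hx0).continuousAt.continuousWithinAt
  · intro x hx
    rw [interior_Ici] at hx
    have hx0 : (0:ℝ) < x := lt_trans one_pos hx
    exact (hasDerivAt_Wf hμ hx0).hasDerivWithinAt
  · intro x hx
    rw [interior_Ici] at hx
    exact Wf_deriv_nonpos hμ (lt_trans one_pos hx)

theorem vf_sq_le (hμ : -1/2 ≤ μ) {z : ℝ} (hz : 1 ≤ z) :
    (vf μ z)^2 ≤ Ef μ 1 * Real.exp (|μ^2 - 1/4|) := by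
  have hz0 : (0:ℝ) < z := lt_of_lt_of_le one_pos hz
  have h1 : Wf μ z ≤ Wf μ 1 := Wf_antitoneOn hμ (Set.self_mem_Ici) hz hz
  have h2 : Ef μ z ≤ Wf μ z := by
    rw [Wf]
    have hE0 : 0 ≤ Ef μ z := by rw [Ef]; positivity
    nlinarith [Real.one_le_exp (div_nonneg (abs_nonneg (μ^2 - 1/4)) hz0.le)]
  have h3 : (vf μ z)^2 ≤ Ef μ z := by rw [Ef]; nlinarith [sq_nonneg (vf₁ μ z)]
  have h4 : Wf μ 1 = Ef μ 1 * Real.exp (|μ^2 - 1/4|) := by rw [Wf]; norm_num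
  linarith

theorem besselJ_repr (hμ : -1/2 ≤ μ) {z : ℝ} (hz : 0 < z) :
    Real.sqrt z * besselJ μ z = vf μ z / (2:ℝ) ^ μ := by
  have hbJ : besselJ μ z = (z/2) ^ μ * Gf μ (z^2/4) := by
    rw [besselJ, Gf, S]
    congr 1
    apply tsum_congr
    intro n
    rw [show z^2/4 = (z/2)^2 from by ring, pow_mul, a]
  rw [hbJ, Real.div_rpow hz.le (by norm_num : (0:ℝ) ≤ 2), Real.sqrt_eq_rpow, vf]
  rw [show μ + 1/2 = 1/2 + μ from by ring, Real.rpow_add hz]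
  · ring

theorem vf_bound (hμ : -1/2 ≤ μ) :
    ∃ B : ℝ, ∀ z > (0:ℝ), |vf μ z| ≤ B := by
  have hGcont : Continuous (Gf μ) :=
    continuous_iff_continuousAt.mpr fun t => (good_hasDerivAt (good_a hμ) t).continuousAt
  obtain ⟨M, hM⟩ := (isCompact_Icc (a := (0:ℝ)) (b := 1)).exists_bound_of_continuousOn
    hGcont.continuousOn
  refine ⟨max (Real.sqrt (Ef μ 1 * Real.exp (|μ^2 - 1/4|))) M, fun z hz => ?_⟩
  rcases le_or_gt 1 z with h1 | h1
  · have h2 := vf_sq_le hμ h1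
    have h3 : |vf μ z| ≤ Real.sqrt (Ef μ 1 * Real.exp (|μ^2 - 1/4|)) := by
      rw [← Real.sqrt_sq_eq_abs]
      exact Real.sqrt_le_sqrt h2
    exact h3.trans (le_max_left _ _)
  · have ht : z^2/4 ∈ Set.Icc (0:ℝ) 1 := ⟨by positivity, by nlinarith⟩
    have hMz := hM _ ht
    rw [Real.norm_eq_abs] at hMz
    have hle : z ^ (μ + 1/2) ≤ 1 := Real.rpow_le_one hz.le h1.le (by linarith)
    have h0 : 0 ≤ z ^ (μ + 1/2) := Real.rpow_nonneg hz.le _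
    have h4 : |vf μ z| ≤ M := by
      rw [vf, abs_mul, abs_of_nonneg h0]
      calc z ^ (μ+1/2) * |Gf μ (z^2/4)| ≤ 1 * M := mul_le_mul hle hMz (abs_nonneg _) one_pos.le
        _ = M := one_mul M
    exact h4.trans (le_max_right _ _)

end Main
end BesselAux

/-- For `μ ≥ -1/2`, the function `z ↦ √z J_μ(z)` is bounded on `(0,∞)`. -/
theorem sqrt_mul_besselJ_bounded (μ : ℝ) (hμ : -1/2 ≤ μ) :
    ∃ C : ℝ, ∀ z > (0 : ℝ), |Real.sqrt z * besselJ μ z| ≤ C := by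
  obtain ⟨B, hB⟩ := BesselAux.vf_bound hμ
  refine ⟨B / (2:ℝ) ^ μ, fun z hz => ?_⟩
  rw [BesselAux.besselJ_repr hμ hz, abs_div, abs_of_pos (Real.rpow_pos_of_pos two_pos μ)]
  gcongr
  exact hB z hz
end

section
/- For μ ≥ -1/2 and each nonnegative integer n with n < μ + 1/2, the function z ↦ D_z^n(√z J_μ(z)) is bounded on (0,∞). -/
open MeasureTheory Filter Set

set_option maxHeartbeats 1000000

section SBJHelpers
open Set



namespace SBJ

/-- Sum of a power series with coefficients `a`. -/
noncomputable def S (a : ℕ → ℝ) (w : ℝ) : ℝ := ∑' k, a k * w ^ k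

/-- Entire-type coefficient decay. -/
def Ent (a : ℕ → ℝ) : Prop := ∀ r : ℝ, 0 < r → Summable (fun k => |a k| * r ^ k)

lemma Ent.abs_summable {a : ℕ → ℝ} (ha : Ent a) (w : ℝ) :
    Summable (fun k => |a k * w ^ k|) := by
  apply Summable.of_nonneg_of_le (fun k => abs_nonneg _) _ (ha (|w| + 1) (by positivity))
  intro k
  rw [abs_mul, abs_pow]
  exact mul_le_mul_of_nonneg_left
    (pow_le_pow_left₀ (abs_nonneg w) (by linarith) k) (abs_nonneg _)

lemma Ent.summable {a : ℕ → ℝ} (ha : Ent a) (w : ℝ) :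
    Summable (fun k => a k * w ^ k) :=
  Summable.of_abs (ha.abs_summable w)

lemma succ_le_two_pow (k : ℕ) : ((k:ℝ) + 1) ≤ 2 ^ k := by
  exact_mod_cast Nat.succ_le_of_lt (Nat.lt_two_pow_self (n := k))

lemma Ent.diag {a : ℕ → ℝ} (ha : Ent a) (c d : ℝ) :
    Ent (fun k => (c + d * k) * a k) := by
  intro r hr
  apply Summable.of_nonneg_of_le (fun k => by positivity)
    (f := fun k => (|c| + |d|) * (|a k| * (2 * r) ^ k))
  · intro k
    have h2 : ((k:ℝ) + 1) * r ^ k ≤ (2 * r) ^ k := by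
      rw [mul_pow]
      exact mul_le_mul_of_nonneg_right (succ_le_two_pow k) (pow_nonneg hr.le k)
    have h1 : |(c + d * k) * a k| ≤ (|c| + |d|) * ((k + 1) * |a k|) := by
      rw [abs_mul]
      have hc : |c + d * (k:ℝ)| ≤ |c| + |d| * k :=
        (abs_add_le _ _).trans (by rw [abs_mul, Nat.abs_cast])
      have hc2 : |c| + |d| * k ≤ (|c| + |d|) * ((k:ℝ) + 1) := by
        nlinarith [abs_nonneg c, abs_nonneg d, Nat.cast_nonneg (α := ℝ) k]
      calc |c + d * (k:ℝ)| * |a k| ≤ ((|c| + |d|) * ((k:ℝ) + 1)) * |a k| :=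
            mul_le_mul_of_nonneg_right (hc.trans hc2) (abs_nonneg _)
        _ = (|c| + |d|) * ((k + 1) * |a k|) := by ring
    calc |(c + d * k) * a k| * r ^ k
        ≤ (|c| + |d|) * ((k + 1) * |a k|) * r ^ k :=
          mul_le_mul_of_nonneg_right h1 (pow_nonneg hr.le k)
      _ = (|c| + |d|) * (|a k| * (((k:ℝ) + 1) * r ^ k)) := by ring
      _ ≤ (|c| + |d|) * (|a k| * (2 * r) ^ k) := by
          refine mul_le_mul_of_nonneg_left ?_ (by positivity)
          exact mul_le_mul_of_nonneg_left h2 (abs_nonneg _)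
  · exact (ha (2 * r) (by linarith)).mul_left _

lemma Ent.const_mul {a : ℕ → ℝ} (ha : Ent a) (c : ℝ) :
    Ent (fun k => c * a k) := by
  intro r hr
  simp_rw [abs_mul, mul_assoc]
  exact (ha r hr).mul_left _

/-- shifted coefficients, corresponding to the derivative of the power series -/
def sh (a : ℕ → ℝ) : ℕ → ℝ := fun k => ((k:ℝ) + 1) * a (k + 1)

lemma Ent.sh {a : ℕ → ℝ} (ha : Ent a) : Ent (SBJ.sh a) := by
  intro r hr
  have hrr : (0:ℝ) < 2 * r := by linarith
  have h : Summable (fun k => (2*r)⁻¹ * (|a (k + 1)| * (2 * r) ^ (k + 1))) :=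
    ((summable_nat_add_iff 1).mpr (ha (2 * r) hrr)).mul_left _
  refine Summable.of_nonneg_of_le (fun k => by positivity) (fun k => ?_) h
  have h2 : ((k:ℝ) + 1) * r ^ k ≤ (2 * r) ^ k := by
    rw [mul_pow]
    exact mul_le_mul_of_nonneg_right (succ_le_two_pow k) (pow_nonneg hr.le k)
  show |((k:ℝ) + 1) * a (k + 1)| * r ^ k ≤ _
  rw [abs_mul, abs_of_pos (show (0:ℝ) < (k:ℝ) + 1 by positivity), pow_succ]
  calc ((k:ℝ) + 1) * |a (k+1)| * r ^ k = |a (k+1)| * (((k:ℝ)+1) * r ^ k) := by ring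
    _ ≤ |a (k+1)| * (2*r) ^ k := mul_le_mul_of_nonneg_left h2 (abs_nonneg _)
    _ = (2*r)⁻¹ * (|a (k+1)| * ((2*r) ^ k * (2*r))) := by
        rw [eq_comm, inv_mul_eq_iff_eq_mul₀ hrr.ne']; ring

/-- unshift: corresponds to multiplication of the power series by `w`. -/
def unsh (a : ℕ → ℝ) : ℕ → ℝ := fun k => match k with
  | 0 => 0
  | k + 1 => a k

lemma Ent.unsh {a : ℕ → ℝ} (ha : Ent a) : Ent (SBJ.unsh a) := by
  intro r hr
  apply (summable_nat_add_iff 1).mp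
  have h : Summable (fun k => r * (|a k| * r ^ k)) := (ha r hr).mul_left _
  refine h.congr fun k => ?_
  show r * (|a k| * r ^ k) = |a k| * r ^ (k + 1)
  rw [pow_succ]; ring

end SBJ
namespace SBJ
lemma ent_mul_nat {a : ℕ → ℝ} (ha : Ent a) :
    ∀ r : ℝ, 0 < r → Summable (fun k : ℕ => (k:ℝ) * |a k| * r ^ k) := by
  intro r hr
  refine ((ha.diag 0 1) r hr).congr fun k => ?_
  rw [abs_mul]
  simp [abs_of_nonneg (Nat.cast_nonneg (α := ℝ) k)]

lemma hasDerivAt_S {a : ℕ → ℝ} (ha : Ent a) (w : ℝ) :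
    HasDerivAt (S a) (S (sh a) w) w := by
  set R : ℝ := |w| + 1 with hR
  have hR1 : (1:ℝ) ≤ R := by rw [hR]; have := abs_nonneg w; linarith
  have hR0 : (0:ℝ) < R := by linarith
  have hu : Summable (fun k : ℕ => (k:ℝ) * |a k| * R ^ k) := ent_mul_nat ha R hR0
  have hbound : ∀ k : ℕ, ∀ y ∈ Ioo (-R) R,
      ‖a k * ((k:ℝ) * y ^ (k - 1))‖ ≤ (k:ℝ) * |a k| * R ^ k := by
    intro k y hy
    have hy' : |y| ≤ R := by
      rw [abs_le]; exact ⟨hy.1.le, hy.2.le⟩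
    rw [Real.norm_eq_abs, abs_mul, abs_mul, abs_pow,
      abs_of_nonneg (Nat.cast_nonneg (α := ℝ) k)]
    calc |a k| * ((k:ℝ) * |y| ^ (k - 1)) = (k:ℝ) * |a k| * |y| ^ (k - 1) := by ring
      _ ≤ (k:ℝ) * |a k| * R ^ k := by
          refine mul_le_mul_of_nonneg_left ?_ (by positivity)
          calc |y| ^ (k-1) ≤ R ^ (k-1) :=
                pow_le_pow_left₀ (abs_nonneg y) hy' _
            _ ≤ R ^ k := pow_le_pow_right₀ hR1 (Nat.sub_le k 1)
  have hder : HasDerivAt (fun z => ∑' k, a k * z ^ k)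
      (∑' k, a k * ((k:ℝ) * w ^ (k - 1))) w := by
    refine hasDerivAt_tsum_of_isPreconnected hu isOpen_Ioo
      (convex_Ioo _ _).isPreconnected
      (fun (k : ℕ) y _ => (hasDerivAt_pow k y).const_mul (a k)) hbound
      (show w ∈ Ioo (-R) R by constructor <;> [nlinarith [abs_nonneg w, neg_abs_le w]; nlinarith [le_abs_self w]])
      (ha.summable w)
      (show w ∈ Ioo (-R) R by constructor <;> [nlinarith [abs_nonneg w, neg_abs_le w]; nlinarith [le_abs_self w]])
  have hval : (∑' k, a k * ((k:ℝ) * w ^ (k - 1))) = S (sh a) w := by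
    have hsum : Summable (fun k : ℕ => a k * ((k:ℝ) * w ^ (k - 1))) :=
      Summable.of_norm_bounded hu (fun k => hbound k w
        ⟨by nlinarith [abs_nonneg w, neg_abs_le w], by nlinarith [le_abs_self w]⟩)
    rw [Summable.tsum_eq_zero_add hsum]
    simp only [Nat.cast_zero, pow_zero, zero_mul, mul_zero, zero_add, Nat.add_sub_cancel]
    refine tsum_congr fun k => ?_
    show a (k+1) * (((k+1:ℕ):ℝ) * w ^ k) = (((k:ℝ)+1) * a (k+1)) * w ^ k
    push_cast; ring
  rw [← hval]
  exact hder

lemma continuous_S {a : ℕ → ℝ} (ha : Ent a) : Continuous (S a) :=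
  continuous_iff_continuousAt.mpr fun w => (hasDerivAt_S ha w).continuousAt

lemma S_unsh {a : ℕ → ℝ} (ha : Ent a) (w : ℝ) :
    S (unsh a) w = w * S a w := by
  have h0 : Summable (fun k => unsh a k * w ^ k) := (ha.unsh).summable w
  rw [S, Summable.tsum_eq_zero_add h0]
  show unsh a 0 * w ^ 0 + (∑' k, unsh a (k+1) * w ^ (k+1)) = _
  have : ∀ k : ℕ, unsh a (k+1) * w ^ (k+1) = w * (a k * w ^ k) := by
    intro k; show a k * w ^ (k+1) = _; rw [pow_succ]; ring
  rw [tsum_congr this, tsum_mul_left]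
  show 0 * w ^ 0 + _ = _
  rw [zero_mul, zero_add, S]

lemma unsh_sh (a : ℕ → ℝ) : unsh (sh a) = fun k : ℕ => (k:ℝ) * a k := by
  funext k
  cases k with
  | zero => simp [unsh]
  | succ k => show sh a k = _; rw [sh]; push_cast; ring

lemma S_diag {a : ℕ → ℝ} (ha : Ent a) (e w : ℝ) :
    S (fun k => (e + 2 * k) * a k) w = e * S a w + 2 * (w * S (sh a) w) := by
  have h1 : Summable (fun k => e * (a k * w ^ k)) := ((ha.summable w).mul_left e)
  have h2 : Summable (fun k : ℕ => 2 * ((k:ℝ) * a k * w ^ k)) := by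
    refine (((ha.diag 0 1).summable w).mul_left 2).congr fun k => ?_
    push_cast; ring
  have : ∀ k : ℕ, ((e + 2 * k) * a k) * w ^ k
      = e * (a k * w ^ k) + 2 * ((k:ℝ) * a k * w ^ k) := fun k => by ring
  rw [S, tsum_congr this, Summable.tsum_add h1 h2, tsum_mul_left, tsum_mul_left]
  have h3 : (∑' k : ℕ, (k:ℝ) * a k * w ^ k) = w * S (sh a) w := by
    rw [← S_unsh ha.sh w, unsh_sh, S]
  rw [h3]; rfl

end SBJ
namespace SBJ
noncomputable def aseq (μ : ℝ) : ℕ → ℝ :=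
  fun k => (2:ℝ) ^ (-μ) * ((-1:ℝ) ^ k / ((k.factorial : ℝ) * Real.Gamma (μ + k + 1)))

noncomputable def qseq (μ : ℝ) : ℕ → ℕ → ℝ
  | 0 => aseq μ
  | m + 1 => fun k => (μ + 1/2 - m + 2 * k) * qseq μ m k

variable {μ : ℝ} (hμ : -(1/2:ℝ) < μ)
include hμ

lemma gamma_arg_pos (k : ℕ) : 0 < μ + k + 1 := by
  have h : (0:ℝ) ≤ k := Nat.cast_nonneg k
  linarith

lemma gamma_pos (k : ℕ) : 0 < Real.Gamma (μ + k + 1) :=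
  Real.Gamma_pos_of_pos (gamma_arg_pos hμ k)

lemma gamma_lb : ∀ k : ℕ,
    Real.Gamma (μ + 1) * k.factorial / 2 ^ k ≤ Real.Gamma (μ + k + 1) := by
  intro k
  induction k with
  | zero => simp
  | succ k ih =>
    have harg : μ + (k + 1 : ℕ) + 1 = (μ + k + 1) + 1 := by push_cast; ring
    rw [harg]
    conv_rhs => rw [Real.Gamma_add_one (gamma_arg_pos hμ k).ne']
    have hkk : ((k+1 : ℕ).factorial : ℝ) = (k + 1) * k.factorial := by
      rw [Nat.factorial_succ]; push_cast; ring
    have hstep : (k:ℝ) + 1 ≤ 2 * (μ + k + 1) := by linarith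
    have hpos : (0:ℝ) < Real.Gamma (μ + 1) * k.factorial / 2 ^ k := by
      have := Real.Gamma_pos_of_pos (show (0:ℝ) < μ + 1 by linarith)
      have : (0:ℝ) < (k.factorial:ℝ) := by exact_mod_cast k.factorial_pos
      positivity
    calc Real.Gamma (μ + 1) * ((k+1:ℕ).factorial) / 2 ^ (k+1)
        = ((k:ℝ) + 1) / 2 * (Real.Gamma (μ + 1) * k.factorial / 2 ^ k) := by
          rw [hkk, pow_succ]; field_simp
      _ ≤ (μ + k + 1) * (Real.Gamma (μ + 1) * k.factorial / 2 ^ k) := by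
          refine mul_le_mul_of_nonneg_right (by linarith) hpos.le
      _ ≤ (μ + k + 1) * Real.Gamma (μ + k + 1) :=
          mul_le_mul_of_nonneg_left ih (gamma_arg_pos hμ k).le

lemma ent_aseq : Ent (aseq μ) := by
  intro r hr
  have hΓ1 : (0:ℝ) < Real.Gamma (μ + 1) :=
    Real.Gamma_pos_of_pos (by linarith)
  have h2 : (0:ℝ) < (2:ℝ) ^ (-μ) := Real.rpow_pos_of_pos (by norm_num) _
  have hsum : Summable (fun k : ℕ => ((2:ℝ)^(-μ) / Real.Gamma (μ+1)) * ((2*r)^k / k.factorial)) :=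
    (Real.summable_pow_div_factorial (2*r)).mul_left _
  refine Summable.of_nonneg_of_le (fun k => by positivity) (fun k => ?_) hsum
  have hfac : (0:ℝ) < (k.factorial : ℝ) := by exact_mod_cast k.factorial_pos
  have hfac1 : (1:ℝ) ≤ (k.factorial : ℝ) := by exact_mod_cast k.factorial_pos
  have hG := gamma_pos hμ k
  have habs : |aseq μ k| = (2:ℝ)^(-μ) / ((k.factorial : ℝ) * Real.Gamma (μ + k + 1)) := by
    rw [aseq, abs_mul, abs_div, abs_pow, abs_neg, abs_one, one_pow,
      abs_of_pos h2, abs_of_pos (by positivity)]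
    rw [mul_one_div]
  rw [habs]
  have hkey : r ^ k / ((k.factorial : ℝ) * Real.Gamma (μ + k + 1))
      ≤ (2*r)^k / (Real.Gamma (μ+1) * k.factorial) := by
    rw [div_le_div_iff₀ (by positivity) (by positivity), mul_pow]
    have hlb := gamma_lb hμ k
    have h1 : Real.Gamma (μ + 1) * k.factorial ≤ 2 ^ k * Real.Gamma (μ + k + 1) := by
      rw [div_le_iff₀ (by positivity)] at hlb
      linarith [hlb]
    calc r ^ k * (Real.Gamma (μ+1) * k.factorial)
        ≤ r ^ k * (2 ^ k * Real.Gamma (μ + k + 1)) :=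
          mul_le_mul_of_nonneg_left h1 (by positivity)
      _ ≤ (k.factorial : ℝ) * (r ^ k * (2 ^ k * Real.Gamma (μ + k + 1))) := by
          nlinarith [mul_pos (pow_pos hr k) (mul_pos (pow_pos (show (0:ℝ)<2 by norm_num) k) hG)]
      _ = 2 ^ k * r ^ k * ((k.factorial:ℝ) * Real.Gamma (μ + k + 1)) := by ring
  calc (2:ℝ)^(-μ) / ((k.factorial : ℝ) * Real.Gamma (μ + k + 1)) * r ^ k
      = (2:ℝ)^(-μ) * (r ^ k / ((k.factorial : ℝ) * Real.Gamma (μ + k + 1))) := by ring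
    _ ≤ (2:ℝ)^(-μ) * ((2*r)^k / (Real.Gamma (μ+1) * k.factorial)) :=
        mul_le_mul_of_nonneg_left hkey h2.le
    _ = ((2:ℝ)^(-μ) / Real.Gamma (μ+1)) * ((2*r)^k / k.factorial) := by
        field_simp

lemma ent_qseq : ∀ m, Ent (qseq μ m)
  | 0 => ent_aseq hμ
  | m + 1 => (ent_qseq m).diag (μ + 1/2 - (m:ℝ)) 2

lemma u_base {z : ℝ} (hz : 0 < z) :
    Real.sqrt z * besselJ μ z = z ^ (μ + 1/2) * S (qseq μ 0) (z^2/4) := by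
  have hsum : (∑' n : ℕ, ((-1 : ℝ) ^ n / ((n.factorial : ℝ) * Real.Gamma (μ + n + 1)))
      * (z / 2) ^ (2 * n)) = S (fun k : ℕ =>
        (-1:ℝ)^k / ((k.factorial : ℝ) * Real.Gamma (μ + k + 1))) (z^2/4) := by
    refine tsum_congr fun k => ?_
    congr 1
    rw [pow_mul]
    congr 1
    rw [div_pow]; norm_num
  have h2 : (0:ℝ) < (2:ℝ)^(-μ) := Real.rpow_pos_of_pos (by norm_num) _
  rw [besselJ, hsum]
  have hd : (z / 2) ^ μ = z ^ μ * (2:ℝ) ^ (-μ) := by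
    rw [Real.div_rpow hz.le (by norm_num), Real.rpow_neg (by norm_num), div_eq_mul_inv]
  rw [hd, Real.sqrt_eq_rpow]
  have hzz : z ^ (1/(2:ℝ)) * (z ^ μ * (2:ℝ)^(-μ)) = z ^ (μ + 1/2) * (2:ℝ)^(-μ) := by
    rw [← mul_assoc, ← Real.rpow_add hz]
    ring_nf
  calc z ^ (1/(2:ℝ)) * (z ^ μ * (2:ℝ)^(-μ) * S _ (z^2/4))
      = (z ^ (1/(2:ℝ)) * (z ^ μ * (2:ℝ)^(-μ))) * S _ (z^2/4) := by ring
    _ = z ^ (μ + 1/2) * ((2:ℝ)^(-μ) * S (fun k : ℕ =>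
        (-1:ℝ)^k / ((k.factorial : ℝ) * Real.Gamma (μ + k + 1))) (z^2/4)) := by
        rw [hzz]; ring
    _ = z ^ (μ + 1/2) * S (qseq μ 0) (z^2/4) := by
        congr 1
        rw [S, S, ← tsum_mul_left]
        exact tsum_congr fun k => by rw [qseq, aseq]; ring

lemma hasDerivAt_RHS (m : ℕ) {z : ℝ} (hz : 0 < z) :
    HasDerivAt (fun z : ℝ => z ^ (μ + 1/2 - m) * S (qseq μ m) (z^2/4))
      (z ^ (μ + 1/2 - m - 1) * S (qseq μ (m+1)) (z^2/4)) z := by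
  set p : ℝ := μ + 1/2 - m with hp
  have H1 : HasDerivAt (fun x : ℝ => x ^ p) (p * z ^ (p - 1)) z :=
    Real.hasDerivAt_rpow_const (Or.inl hz.ne')
  have Hin : HasDerivAt (fun z : ℝ => z^2/4) (z/2) z := by
    have := (hasDerivAt_pow 2 z).div_const 4
    refine this.congr_deriv ?_
    norm_num; ring
  have H2 : HasDerivAt (fun z : ℝ => S (qseq μ m) (z^2/4))
      (S (sh (qseq μ m)) (z^2/4) * (z/2)) z :=
    (hasDerivAt_S (ent_qseq hμ m) _).comp z Hin
  have Htot := H1.mul H2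
  refine Htot.congr_deriv ?_
  set w : ℝ := z^2/4 with hw
  have hq : qseq μ (m+1) = fun k : ℕ => (p + 2 * k) * qseq μ m k := rfl
  rw [hq, S_diag (ent_qseq hμ m) p w]
  have hzp : z ^ p = z ^ (p - 1) * z := by
    rw [← Real.rpow_add_one hz.ne' (p-1)]; ring_nf
  rw [hzp]
  have hzw : (z ^ (p-1) * z) * (S (sh (qseq μ m)) w * (z/2))
      = z ^ (p-1) * (2 * (w * S (sh (qseq μ m)) w)) := by
    rw [hw]; ring
  rw [hzw]; ring

lemma iter_formula : ∀ m : ℕ, ∀ z : ℝ, 0 < z →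
    iteratedDeriv m (fun z : ℝ => Real.sqrt z * besselJ μ z) z
      = z ^ (μ + 1/2 - m) * S (qseq μ m) (z^2/4) := by
  intro m
  induction m with
  | zero =>
    intro z hz
    rw [iteratedDeriv_zero]
    rw [u_base hμ hz]
    norm_num
  | succ m ih =>
    intro z hz
    rw [iteratedDeriv_succ]
    have hev : iteratedDeriv m (fun z : ℝ => Real.sqrt z * besselJ μ z)
        =ᶠ[nhds z] fun z : ℝ => z ^ (μ + 1/2 - m) * S (qseq μ m) (z^2/4) :=
      Filter.eventuallyEq_of_mem (Ioi_mem_nhds hz) (fun y hy => ih y hy)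
    rw [hev.deriv_eq, (hasDerivAt_RHS hμ m hz).deriv,
      show μ + 1/2 - ((m+1:ℕ):ℝ) = μ + 1/2 - m - 1 by push_cast; ring]

lemma hasDerivAt_iter (m : ℕ) {z : ℝ} (hz : 0 < z) :
    HasDerivAt (iteratedDeriv m (fun z : ℝ => Real.sqrt z * besselJ μ z))
      (iteratedDeriv (m+1) (fun z : ℝ => Real.sqrt z * besselJ μ z) z) z := by
  have hev : iteratedDeriv m (fun z : ℝ => Real.sqrt z * besselJ μ z)
      =ᶠ[nhds z] fun z : ℝ => z ^ (μ + 1/2 - m) * S (qseq μ m) (z^2/4) :=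
    Filter.eventuallyEq_of_mem (Ioi_mem_nhds hz) (fun y hy => iter_formula hμ m y hy)
  have h := (hasDerivAt_RHS hμ m hz).congr_of_eventuallyEq hev
  rwa [iter_formula hμ (m+1) z hz,
    show μ + 1/2 - ((m+1:ℕ):ℝ) = μ + 1/2 - m - 1 by push_cast; ring]

end SBJ


namespace SBJ
variable {μ : ℝ} (hμ : -(1/2:ℝ) < μ)
include hμ

lemma coeff_zero : ∀ k : ℕ, qseq μ 2 k
    = -(4 * unsh (qseq μ 0) k) - (1/4 - μ^2) * qseq μ 0 k := by
  intro k
  cases k with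
  | zero =>
    show (μ + 1/2 - ((1:ℕ):ℝ) + 2 * ((0:ℕ):ℝ)) * ((μ + 1/2 - ((0:ℕ):ℝ) + 2 * ((0:ℕ):ℝ)) * aseq μ 0)
      = -(4 * 0) - (1/4 - μ^2) * aseq μ 0
    push_cast
    ring
  | succ k =>
    have hG : Real.Gamma (μ + ((k+1:ℕ):ℝ) + 1) = (μ + k + 1) * Real.Gamma (μ + k + 1) := by
      rw [show μ + ((k+1:ℕ):ℝ) + 1 = (μ + k + 1) + 1 by push_cast; ring,
        Real.Gamma_add_one (gamma_arg_pos hμ k).ne']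
    have hfac : ((k+1:ℕ).factorial : ℝ) = ((k:ℝ) + 1) * k.factorial := by
      rw [Nat.factorial_succ]; push_cast; ring
    show (μ + 1/2 - ((1:ℕ):ℝ) + 2 * ((k+1:ℕ):ℝ)) *
        ((μ + 1/2 - ((0:ℕ):ℝ) + 2 * ((k+1:ℕ):ℝ)) * aseq μ (k+1))
      = -(4 * aseq μ k) - (1/4 - μ^2) * aseq μ (k+1)
    rw [aseq, aseq, hG, hfac]
    have h1 : Real.Gamma (μ + k + 1) ≠ 0 := (gamma_pos hμ k).ne'
    have h2 : ((k.factorial : ℝ)) ≠ 0 := by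
      exact_mod_cast k.factorial_ne_zero
    have h3 : (μ + (k:ℝ) + 1) ≠ 0 := (gamma_arg_pos hμ k).ne'
    have h4 : ((k:ℝ) + 1) ≠ 0 := by positivity
    push_cast
    rw [pow_succ]
    field_simp
    ring

lemma ode {z : ℝ} (hz : 0 < z) :
    iteratedDeriv 2 (fun z : ℝ => Real.sqrt z * besselJ μ z) z
      = -(Real.sqrt z * besselJ μ z)
        - (1/4 - μ^2) * ((z^2)⁻¹ * (Real.sqrt z * besselJ μ z)) := by
  have hw0 : (0:ℝ) < z^2/4 := by positivity
  set w : ℝ := z^2/4 with hw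
  have key : S (qseq μ 2) w = -(4 * (w * S (qseq μ 0) w)) - (1/4 - μ^2) * S (qseq μ 0) w := by
    have h0 := ent_qseq hμ 0
    have hsum1 : Summable (fun k => (-4:ℝ) * (unsh (qseq μ 0) k * w ^ k)) :=
      ((h0.unsh).summable w).mul_left _
    have hsum2 : Summable (fun k => (-(1/4 - μ^2)) * (qseq μ 0 k * w ^ k)) :=
      (h0.summable w).mul_left _
    have : ∀ k : ℕ, qseq μ 2 k * w ^ k
        = (-4:ℝ) * (unsh (qseq μ 0) k * w ^ k) + (-(1/4 - μ^2)) * (qseq μ 0 k * w ^ k) := by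
      intro k; rw [coeff_zero hμ k]; ring
    rw [S, tsum_congr this, Summable.tsum_add hsum1 hsum2, tsum_mul_left, tsum_mul_left]
    have hU := S_unsh h0 w
    rw [S] at hU
    rw [hU, show (∑' k, qseq μ 0 k * w ^ k) = S (qseq μ 0) w from rfl]
    ring
  rw [iter_formula hμ 2 z hz, u_base hμ hz]
  have hz2 : z ^ (μ + 1/2) = z ^ (μ + 1/2 - 2) * z^2 := by
    rw [← Real.rpow_natCast z 2, ← Real.rpow_add hz]
    norm_num
  have h4w : z^2 = 4*w := by rw [hw]; ring
  rw [show μ + 1/2 - ((2:ℕ):ℝ) = μ + 1/2 - 2 by norm_num, key, hz2, h4w]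
  have hw0' : (4:ℝ)*w ≠ 0 := by positivity
  field_simp

end SBJ


namespace SBJ
variable {μ : ℝ} (hμ : -(1/2:ℝ) < μ)

lemma iterWithin_eq {f : ℝ → ℝ} {s : Set ℝ} (hs : IsOpen s) {x : ℝ} (hx : x ∈ s) (m : ℕ) :
    iteratedDerivWithin m f s x = iteratedDeriv m f x := by
  rw [iteratedDerivWithin_eq_iteratedFDerivWithin, iteratedDeriv_eq_iteratedFDeriv,
    iteratedFDerivWithin_of_isOpen m hs hx]

include hμ

lemma contDiffOn_u (n : ℕ∞) :
    ContDiffOn ℝ n (fun z : ℝ => Real.sqrt z * besselJ μ z) (Ioi 0) := by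
  apply contDiffOn_of_differentiableOn_deriv
  intro m _ z hz
  exact ((hasDerivAt_iter hμ m hz).differentiableAt.differentiableWithinAt).congr
    (fun y hy => iterWithin_eq isOpen_Ioi hy m) (iterWithin_eq isOpen_Ioi hz m)

lemma energy_bound :
    ∃ C : ℝ, ∀ z ≥ (1:ℝ),
      |Real.sqrt z * besselJ μ z| ≤ C ∧
      |iteratedDeriv 1 (fun z : ℝ => Real.sqrt z * besselJ μ z) z| ≤ C := by
  set U : ℝ → ℝ := fun z : ℝ => Real.sqrt z * besselJ μ z with hUdef
  set c : ℝ := 1/4 - μ^2 with hc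
  set E : ℝ → ℝ := fun z => (iteratedDeriv 1 U z)^2 + (U z)^2 with hE
  set F : ℝ → ℝ := fun z => E z * Real.exp (|c| / z) with hF
  have hU1 : ∀ z : ℝ, 0 < z → HasDerivAt U (iteratedDeriv 1 U z) z := by
    intro z hz
    have := hasDerivAt_iter hμ 0 hz
    rwa [iteratedDeriv_zero] at this
  have hU2 : ∀ z : ℝ, 0 < z → HasDerivAt (iteratedDeriv 1 U) (iteratedDeriv 2 U z) z :=
    fun z hz => hasDerivAt_iter hμ 1 hz
  have hEderiv : ∀ z : ℝ, 0 < z → HasDerivAt E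
      (2 * iteratedDeriv 1 U z * iteratedDeriv 2 U z + 2 * U z * iteratedDeriv 1 U z) z := by
    intro z hz
    have h1 := ((hU2 z hz).pow 2).add ((hU1 z hz).pow 2)
    refine h1.congr_deriv ?_
    push_cast
    ring
  have hexp : ∀ z : ℝ, 0 < z → HasDerivAt (fun z => Real.exp (|c| / z))
      (Real.exp (|c| / z) * (|c| * -(z^2)⁻¹)) z := by
    intro z hz
    have hin : HasDerivAt (fun z : ℝ => |c| / z) (|c| * -(z^2)⁻¹) z := by
      simpa [div_eq_mul_inv] using (hasDerivAt_inv hz.ne').const_mul |c|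
    exact ((Real.hasDerivAt_exp (|c| / z)).comp z hin).congr_deriv (by ring)
  have hFderiv : ∀ z : ℝ, 0 < z → HasDerivAt F
      ((2 * iteratedDeriv 1 U z * iteratedDeriv 2 U z + 2 * U z * iteratedDeriv 1 U z)
        * Real.exp (|c| / z) + E z * (Real.exp (|c| / z) * (|c| * -(z^2)⁻¹))) z :=
    fun z hz => (hEderiv z hz).mul (hexp z hz)
  have hF_nonpos : ∀ z : ℝ, 1 ≤ z → deriv F z ≤ 0 := by
    intro z hz1
    have hz : (0:ℝ) < z := lt_of_lt_of_le one_pos hz1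
    rw [(hFderiv z hz).deriv]
    have hode := ode hμ hz
    rw [show iteratedDeriv 2 U z
        = -(U z) - c * ((z^2)⁻¹ * U z) from hode]
    have hexp_pos := Real.exp_pos (|c| / z)
    have hz2 : (0:ℝ) < (z^2)⁻¹ := by positivity
    have key : 2 * iteratedDeriv 1 U z * (-(U z) - c * ((z^2)⁻¹ * U z))
        + 2 * U z * iteratedDeriv 1 U z
        + E z * (|c| * -(z^2)⁻¹)
        ≤ 0 := by
      have expand : 2 * iteratedDeriv 1 U z * (-(U z) - c * ((z^2)⁻¹ * U z))
          + 2 * U z * iteratedDeriv 1 U z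
          = -(2 * c * (z^2)⁻¹ * U z * iteratedDeriv 1 U z) := by ring
      rw [expand, hE]
      have h1 : -(2 * c * U z * iteratedDeriv 1 U z)
          ≤ |c| * ((iteratedDeriv 1 U z)^2 + (U z)^2) := by
        nlinarith [sq_nonneg (U z - iteratedDeriv 1 U z), sq_nonneg (U z + iteratedDeriv 1 U z),
          le_abs_self c, neg_abs_le c]
      calc -(2 * c * (z^2)⁻¹ * U z * iteratedDeriv 1 U z)
          + ((iteratedDeriv 1 U z)^2 + (U z)^2) * (|c| * -(z^2)⁻¹)
          = (z^2)⁻¹ * (-(2 * c * U z * iteratedDeriv 1 U z)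
            - |c| * ((iteratedDeriv 1 U z)^2 + (U z)^2)) := by ring
        _ ≤ (z^2)⁻¹ * 0 := by
            refine mul_le_mul_of_nonneg_left ?_ hz2.le
            linarith
        _ = 0 := by ring
    calc (2 * iteratedDeriv 1 U z * (-(U z) - c * ((z^2)⁻¹ * U z))
          + 2 * U z * iteratedDeriv 1 U z) * Real.exp (|c| / z)
        + E z * (Real.exp (|c| / z) * (|c| * -(z^2)⁻¹))
        = Real.exp (|c| / z) * (2 * iteratedDeriv 1 U z * (-(U z) - c * ((z^2)⁻¹ * U z))
          + 2 * U z * iteratedDeriv 1 U z + E z * (|c| * -(z^2)⁻¹)) := by ring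
      _ ≤ Real.exp (|c| / z) * 0 := mul_le_mul_of_nonneg_left key hexp_pos.le
      _ = 0 := by ring
  have hanti : AntitoneOn F (Ici 1) := by
    refine antitoneOn_of_deriv_nonpos (convex_Ici 1) ?_ ?_ ?_
    · intro z hz
      exact (hFderiv z (lt_of_lt_of_le one_pos hz)).continuousAt.continuousWithinAt
    · rw [interior_Ici]
      intro z hz
      exact (hFderiv z (lt_trans one_pos hz)).differentiableAt.differentiableWithinAt
    · rw [interior_Ici]
      intro z hz
      exact hF_nonpos z (le_of_lt hz)
  refine ⟨Real.sqrt (F 1), fun z hz1 => ?_⟩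
  have hz : (0:ℝ) < z := lt_of_lt_of_le one_pos hz1
  have hEz : E z ≤ F 1 := by
    have h1 : E z ≤ F z := by
      rw [hF]
      have : (1:ℝ) ≤ Real.exp (|c| / z) := Real.one_le_exp (by positivity)
      nlinarith [sq_nonneg (iteratedDeriv 1 U z), sq_nonneg (U z)]
    exact h1.trans (hanti (mem_Ici.mpr le_rfl) (mem_Ici.mpr hz1) hz1)
  have hEz' : iteratedDeriv 1 U z ^ 2 + U z ^ 2 ≤ F 1 := hEz
  constructor
  · have : (U z)^2 ≤ F 1 := by
      have := sq_nonneg (iteratedDeriv 1 U z); linarith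
    calc |U z| = Real.sqrt ((U z)^2) := (Real.sqrt_sq_eq_abs _).symm
      _ ≤ Real.sqrt (F 1) := Real.sqrt_le_sqrt this
  · have : (iteratedDeriv 1 U z)^2 ≤ F 1 := by
      have := sq_nonneg (U z); linarith
    calc |iteratedDeriv 1 U z| = Real.sqrt ((iteratedDeriv 1 U z)^2) :=
        (Real.sqrt_sq_eq_abs _).symm
      _ ≤ Real.sqrt (F 1) := Real.sqrt_le_sqrt this

end SBJ



namespace SBJ
variable {μ : ℝ} (hμ : -(1/2:ℝ) < μ)

lemma zpow_bound (i : ℕ) {z : ℝ} (hz : 1 ≤ z) :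
    |iteratedDeriv i (fun y : ℝ => (y^2)⁻¹) z| ≤ ∏ j ∈ Finset.range i, ((2:ℝ) + j) := by
  have hz0 : (0:ℝ) < z := lt_of_lt_of_le one_pos hz
  have hfun : (fun y : ℝ => (y^2)⁻¹) = fun y : ℝ => y ^ (-2:ℤ) := by
    funext y
    rw [show ((-2:ℤ)) = -((2:ℕ):ℤ) by norm_num, zpow_neg, zpow_natCast]
  rw [hfun, iteratedDeriv_eq_iterate, iter_deriv_zpow, abs_mul]
  push_cast
  have h1 : |∏ j ∈ Finset.range i, ((-2:ℝ) - j)| = ∏ j ∈ Finset.range i, ((2:ℝ)+j) := by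
    rw [Finset.abs_prod]
    refine Finset.prod_congr rfl fun j _ => ?_
    rw [abs_of_nonpos (show (-2:ℝ) - j ≤ 0 by
      have : (0:ℝ) ≤ j := Nat.cast_nonneg j
      linarith)]
    ring
  rw [h1]
  have h2 : |z ^ (-2 - (i:ℤ))| ≤ 1 := by
    rw [show (-2 - (i:ℤ)) = -(((2+i:ℕ)):ℤ) by push_cast; ring, zpow_neg, zpow_natCast,
      abs_inv, abs_pow, abs_of_pos hz0]
    have h3 : (1:ℝ) ≤ z ^ (2+i) := one_le_pow₀ hz
    exact inv_le_one_of_one_le₀ h3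
  have hprod_nonneg : (0:ℝ) ≤ ∏ j ∈ Finset.range i, ((2:ℝ)+j) :=
    Finset.prod_nonneg fun j _ => by positivity
  calc (∏ j ∈ Finset.range i, ((2:ℝ)+j)) * |z ^ (-2 - (i:ℤ))|
      ≤ (∏ j ∈ Finset.range i, ((2:ℝ)+j)) * 1 :=
        mul_le_mul_of_nonneg_left h2 hprod_nonneg
    _ = ∏ j ∈ Finset.range i, ((2:ℝ)+j) := mul_one _

include hμ

lemma bound_infty : ∀ m : ℕ, ∃ C : ℝ, ∀ z ≥ (1:ℝ),
    |iteratedDeriv m (fun z : ℝ => Real.sqrt z * besselJ μ z) z| ≤ C := by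
  intro m
  induction m using Nat.strong_induction_on with
  | _ m IH =>
  match m, IH with
  | 0, _ =>
    obtain ⟨C, hC⟩ := energy_bound hμ
    exact ⟨C, fun z hz => by
      rw [iteratedDeriv_zero]; exact (hC z hz).1⟩
  | 1, _ =>
    obtain ⟨C, hC⟩ := energy_bound hμ
    exact ⟨C, fun z hz => (hC z hz).2⟩
  | (k+2), IH =>
    set U : ℝ → ℝ := fun z : ℝ => Real.sqrt z * besselJ μ z with hUdef
    choose Cf hCf using fun j : Fin (k+2) => IH j j.is_lt
    set D : ℝ := ∑ j : Fin (k+2), |Cf j| with hD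
    have hDb : ∀ j : ℕ, j ≤ k+1 → ∀ z ≥ (1:ℝ), |iteratedDeriv j U z| ≤ D := by
      intro j hj z hz
      have h1 := hCf ⟨j, by omega⟩ z hz
      have h2 : |Cf ⟨j, by omega⟩| ≤ D :=
        Finset.single_le_sum (f := fun j => |Cf j|) (fun i _ => abs_nonneg _) (Finset.mem_univ _)
      exact h1.trans ((le_abs_self _).trans h2)
    set s : Set ℝ := Ioi (1/2 : ℝ) with hsdef
    have hs : IsOpen s := isOpen_Ioi
    have hsu : UniqueDiffOn ℝ s := hs.uniqueDiffOn
    have hsub : s ⊆ Ioi (0:ℝ) := fun y hy => lt_trans (by norm_num : (0:ℝ) < 1/2) hy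
    have hUs : ContDiffOn ℝ (k:ℕ) U s := (contDiffOn_u hμ (k:ℕ∞)).mono hsub
    have hgs : ContDiffOn ℝ (k:ℕ) (fun y : ℝ => (y^2)⁻¹) s := by
      refine ContDiffOn.inv ?_ ?_
      · exact (contDiff_id.pow 2).contDiffOn
      · intro y hy
        have hy0 : (0:ℝ) < y := hsub hy
        positivity
    set c : ℝ := 1/4 - μ^2 with hc
    refine ⟨D + |c| * ∑ i ∈ Finset.range (k+1),
      (k.choose i : ℝ) * ((∏ j ∈ Finset.range i, ((2:ℝ)+j)) * D), fun z hz1 => ?_⟩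
    have hz : (0:ℝ) < z := lt_of_lt_of_le one_pos hz1
    have hzs : z ∈ s := by
      show (1/2:ℝ) < z; linarith
    have e1 : iteratedDeriv (k+2) U = iteratedDeriv k (deriv (deriv U)) := by
      rw [iteratedDeriv_succ', iteratedDeriv_succ']
    have hev : deriv (deriv U) =ᶠ[nhds z] (fun y => -(U y) - c * ((y^2)⁻¹ * U y)) := by
      refine Filter.eventuallyEq_of_mem (Ioi_mem_nhds hz) (fun y hy => ?_)
      have h2d : deriv (deriv U) y = iteratedDeriv 2 U y := by
        rw [iteratedDeriv_succ, iteratedDeriv_one]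
      rw [h2d]
      exact ode hμ hy
    have e2 : iteratedDeriv (k+2) U z
        = iteratedDerivWithin k (fun y => -(U y) - c * ((y^2)⁻¹ * U y)) s z := by
      rw [e1, hev.iteratedDeriv_eq k, iterWithin_eq hs hzs k]
    have hsplit : (fun y => -(U y) - c * ((y^2)⁻¹ * U y))
        = (fun y => -(U y)) + (fun y => (-c) * ((y^2)⁻¹ * U y)) := by
      funext y
      show -(U y) - c * ((y^2)⁻¹ * U y) = -(U y) + (-c) * ((y^2)⁻¹ * U y)
      ring
    have hf1 : ContDiffOn ℝ (k:ℕ) (fun y => -(U y)) s := hUs.neg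
    have hprodCD : ContDiffOn ℝ (k:ℕ) (fun y : ℝ => (y^2)⁻¹ * U y) s := hgs.mul hUs
    have hf2 : ContDiffOn ℝ (k:ℕ) (fun y => (-c) * ((y^2)⁻¹ * U y)) s :=
      contDiffOn_const.mul hprodCD
    have e4 : iteratedDerivWithin k (fun y => -(U y) - c * ((y^2)⁻¹ * U y)) s z
        = -(iteratedDerivWithin k U s z)
          + (-c) * iteratedDerivWithin k (fun y : ℝ => (y^2)⁻¹ * U y) s z := by
      rw [hsplit, iteratedDerivWithin_add hzs hsu (hf1.contDiffWithinAt hzs) (hf2.contDiffWithinAt hzs),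
        iteratedDerivWithin_fun_neg U,
        iteratedDerivWithin_const_mul hzs hsu (-c) (hprodCD.contDiffWithinAt hzs)]
    have hb1 : |iteratedDerivWithin k U s z| ≤ D := by
      rw [iterWithin_eq hs hzs k]
      exact hDb k (by omega) z hz1
    have hb2 : |iteratedDerivWithin k (fun y : ℝ => (y^2)⁻¹ * U y) s z|
        ≤ ∑ i ∈ Finset.range (k+1),
          (k.choose i : ℝ) * ((∏ j ∈ Finset.range i, ((2:ℝ)+j)) * D) := by
      have hleib := norm_iteratedFDerivWithin_mul_le (𝕜 := ℝ)
        (f := fun y : ℝ => (y^2)⁻¹) (g := U) (N := (k:ℕ∞)) hgs hUs hsu hzs le_rfl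
      rw [← Real.norm_eq_abs, ← norm_iteratedFDerivWithin_eq_norm_iteratedDerivWithin]
      refine hleib.trans (Finset.sum_le_sum fun i hi => ?_)
      have hik : i ≤ k := by
        have := Finset.mem_range.mp hi; omega
      have hgb : ‖iteratedFDerivWithin ℝ i (fun y : ℝ => (y^2)⁻¹) s z‖
          ≤ ∏ j ∈ Finset.range i, ((2:ℝ)+j) := by
        rw [norm_iteratedFDerivWithin_eq_norm_iteratedDerivWithin, Real.norm_eq_abs,
          iterWithin_eq hs hzs i]
        exact zpow_bound i hz1
      have hub : ‖iteratedFDerivWithin ℝ (k-i) U s z‖ ≤ D := by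
        rw [norm_iteratedFDerivWithin_eq_norm_iteratedDerivWithin, Real.norm_eq_abs,
          iterWithin_eq hs hzs (k-i)]
        exact hDb (k-i) (by omega) z hz1
      have hD0 : (0:ℝ) ≤ D := le_trans (abs_nonneg _) (hDb 0 (by omega) 1 le_rfl)
      have hchoose : (0:ℝ) ≤ (k.choose i : ℝ) := Nat.cast_nonneg _
      calc (k.choose i : ℝ) * ‖iteratedFDerivWithin ℝ i (fun y : ℝ => (y^2)⁻¹) s z‖
            * ‖iteratedFDerivWithin ℝ (k-i) U s z‖
          ≤ (k.choose i : ℝ) * (∏ j ∈ Finset.range i, ((2:ℝ)+j))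
            * ‖iteratedFDerivWithin ℝ (k-i) U s z‖ := by
            refine mul_le_mul_of_nonneg_right ?_ (norm_nonneg _)
            exact mul_le_mul_of_nonneg_left hgb hchoose
        _ ≤ (k.choose i : ℝ) * (∏ j ∈ Finset.range i, ((2:ℝ)+j)) * D := by
            refine mul_le_mul_of_nonneg_left hub ?_
            have : (0:ℝ) ≤ ∏ j ∈ Finset.range i, ((2:ℝ)+j) :=
              Finset.prod_nonneg fun j _ => by positivity
            positivity
        _ = (k.choose i : ℝ) * ((∏ j ∈ Finset.range i, ((2:ℝ)+j)) * D) := by ring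
    rw [e2, e4]
    calc |-(iteratedDerivWithin k U s z)
        + (-c) * iteratedDerivWithin k (fun y : ℝ => (y^2)⁻¹ * U y) s z|
        ≤ |iteratedDerivWithin k U s z|
          + |c| * |iteratedDerivWithin k (fun y : ℝ => (y^2)⁻¹ * U y) s z| := by
          refine (abs_add_le _ _).trans ?_
          rw [abs_neg, abs_mul, abs_neg]
      _ ≤ D + |c| * ∑ i ∈ Finset.range (k+1),
          (k.choose i : ℝ) * ((∏ j ∈ Finset.range i, ((2:ℝ)+j)) * D) := by
          refine add_le_add hb1 (mul_le_mul_of_nonneg_left hb2 (abs_nonneg _))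

end SBJ


end SBJHelpers

open SBJ in
/-- For `μ ≥ -1/2` and `n ∈ ℕ` with `n < μ + 1/2`, the `n`-th derivative of
`z ↦ √z J_μ(z)` is bounded on `(0,∞)`. -/
theorem iteratedDeriv_sqrt_besselJ_bounded
    (μ : ℝ) (n : ℕ) (hμ : -1/2 ≤ μ) (hn : (n : ℝ) < μ + 1/2) :
    ∃ C : ℝ, ∀ z > (0 : ℝ),
      ‖iteratedDeriv n (fun z : ℝ => Real.sqrt z * besselJ μ z) z‖ ≤ C := by
  have hμ' : -(1/2:ℝ) < μ := by
    have h0 : (0:ℝ) ≤ n := Nat.cast_nonneg n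
    linarith
  obtain ⟨C1, hC1⟩ := bound_infty hμ' n
  obtain ⟨C2, hC2⟩ := (isCompact_Icc (a := (0:ℝ)) (b := 1)).exists_bound_of_continuousOn
    (continuous_S (ent_qseq hμ' n)).continuousOn
  refine ⟨max C1 C2, fun z hz => ?_⟩
  rw [Real.norm_eq_abs]
  rcases le_or_gt 1 z with h1 | h1
  · exact (hC1 z h1).trans (le_max_left _ _)
  · rw [iter_formula hμ' n z hz]
    have hw : z^2/4 ∈ Set.Icc (0:ℝ) 1 := ⟨by positivity, by nlinarith⟩
    have h3 := hC2 _ hw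
    rw [Real.norm_eq_abs] at h3
    have hzp : z ^ (μ + 1/2 - (n:ℝ)) ≤ 1 := Real.rpow_le_one hz.le h1.le (by linarith)
    have hzp0 : 0 ≤ z ^ (μ + 1/2 - (n:ℝ)) := Real.rpow_nonneg hz.le _
    calc |z ^ (μ+1/2-(n:ℝ)) * S (qseq μ n) (z^2/4)|
        = z ^ (μ+1/2-(n:ℝ)) * |S (qseq μ n) (z^2/4)| := by
          rw [abs_mul, abs_of_nonneg hzp0]
      _ ≤ 1 * C2 := mul_le_mul hzp h3 (abs_nonneg _) one_pos.le
      _ = C2 := one_mul _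
      _ ≤ max C1 C2 := le_max_right _ _
end
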